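/- (Proposition 2, extinction branch.) Let κ ≥ θ ≥ 2 be integers, λ ≥ 0 a real, and p ∈ (0,1]. Let ρ : [0,∞) → (0,1] be differentiable with ρ(0) = p, satisfying the mean-field equation ρ'(t) = −ρ(t) + λ·(1−ρ(t))·Bin(κ,ρ(t),θ) for all t ≥ 0. If λ < λ_c^MF(κ,θ) or p < p_c^MF(κ,θ,λ), then there exists C ∈ (0,∞) such that p·e^{−t} ≤ ρ(t) ≤ C·e^{−t} for all t ≥ 0. -/

import Mathlib

/-- Bin(κ,x,θ) = ∑_{i=θ}^{κ} (κ choose i) x^i (1−x)^{κ−i}. -/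
noncomputable def binTail (κ : ℕ) (x : ℝ) (θ : ℕ) : ℝ :=
  ∑ i ∈ Finset.Icc θ κ, (κ.choose i : ℝ) * x ^ i * (1 - x) ^ (κ - i)

/-- H(κ,θ,λ;x) = −1 + λ·((1−x)/x)·Bin(κ,x,θ). -/
noncomputable def Hmf (κ θ : ℕ) (lam x : ℝ) : ℝ :=
  -1 + lam * ((1 - x) / x) * binTail κ x θ

/-- λ_c^MF(κ,θ) = sup{λ ≥ 0 : sup_{x∈(0,1]} H(κ,θ,λ;x) < 0}. -/
noncomputable def lambdaMF (κ θ : ℕ) : ℝ :=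
  sSup {lam : ℝ | 0 ≤ lam ∧ sSup ((fun x => Hmf κ θ lam x) '' Set.Ioc 0 1) < 0}

/-- p_c^MF(κ,θ,λ) = inf{x ∈ (0,1] : H(κ,θ,λ;x) ≥ 0}. -/
noncomputable def pcMF (κ θ : ℕ) (lam : ℝ) : ℝ :=
  sInf {x ∈ Set.Ioc (0:ℝ) 1 | 0 ≤ Hmf κ θ lam x}

lemma binTail_nonneg (κ θ : ℕ) {x : ℝ} (h0 : 0 ≤ x) (h1 : x ≤ 1) :
    0 ≤ binTail κ x θ := by
  apply Finset.sum_nonneg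
  intro i _
  have : (0:ℝ) ≤ 1 - x := by linarith
  positivity

lemma binTail_le (κ θ : ℕ) {x : ℝ} (h0 : 0 ≤ x) (h1 : x ≤ 1) :
    binTail κ x θ ≤ 2 ^ κ * x ^ θ := by
  have h1x : (0:ℝ) ≤ 1 - x := by linarith
  calc binTail κ x θ ≤ ∑ i ∈ Finset.Icc θ κ, (κ.choose i : ℝ) * x ^ θ := by
        apply Finset.sum_le_sum
        intro i hi
        have hiθ : θ ≤ i := (Finset.mem_Icc.mp hi).1
        have hx1 : x ^ i ≤ x ^ θ := pow_le_pow_of_le_one h0 h1 hiθ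
        have hx2 : (1 - x) ^ (κ - i) ≤ 1 := pow_le_one₀ h1x (by linarith)
        have hc : (0:ℝ) ≤ (κ.choose i : ℝ) := by positivity
        calc (κ.choose i : ℝ) * x ^ i * (1 - x) ^ (κ - i)
            ≤ (κ.choose i : ℝ) * x ^ i * 1 := by
              apply mul_le_mul_of_nonneg_left hx2; positivity
          _ = (κ.choose i : ℝ) * x ^ i := by ring
          _ ≤ (κ.choose i : ℝ) * x ^ θ := mul_le_mul_of_nonneg_left hx1 hc
    _ = (∑ i ∈ Finset.Icc θ κ, (κ.choose i : ℝ)) * x ^ θ := by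
        rw [Finset.sum_mul]
    _ ≤ 2 ^ κ * x ^ θ := by
        apply mul_le_mul_of_nonneg_right _ (by positivity)
        have hsub : Finset.Icc θ κ ⊆ Finset.range (κ + 1) := by
          intro i hi
          simp only [Finset.mem_range, Finset.mem_Icc] at *
          omega
        calc (∑ i ∈ Finset.Icc θ κ, (κ.choose i : ℝ))
            ≤ ∑ i ∈ Finset.range (κ + 1), (κ.choose i : ℝ) :=
              Finset.sum_le_sum_of_subset_of_nonneg hsub (by intros; positivity)
          _ = 2 ^ κ := by
              rw [← Nat.cast_sum]
              rw [Nat.sum_range_choose]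
              push_cast; ring

lemma Hmf_le (κ θ : ℕ) (hθ : 2 ≤ θ) {lam x : ℝ} (hlam : 0 ≤ lam)
    (hx0 : 0 < x) (hx1 : x ≤ 1) :
    Hmf κ θ lam x ≤ -1 + lam * 2 ^ κ * x := by
  have hb0 := binTail_nonneg κ θ hx0.le hx1
  have hb1 := binTail_le κ θ hx0.le hx1
  have h1x : (0:ℝ) ≤ 1 - x := by linarith
  have key : ((1 - x) / x) * binTail κ x θ ≤ 2 ^ κ * x := by
    have h2 : ((1 - x) / x) * binTail κ x θ ≤ (1 / x) * (2 ^ κ * x ^ θ) := by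
      apply mul_le_mul
      · gcongr <;> linarith
      · exact hb1
      · exact hb0
      · positivity
    have h3 : (1 / x) * (2 ^ κ * x ^ θ) = 2 ^ κ * x ^ (θ - 1) := by
      have hxθ : x ^ θ = x ^ (θ - 1) * x := (pow_sub_one_mul (by omega) x).symm
      rw [hxθ]; field_simp
    have h4 : x ^ (θ - 1) ≤ x := by
      calc x ^ (θ - 1) ≤ x ^ 1 := pow_le_pow_of_le_one hx0.le hx1 (by omega)
        _ = x := pow_one x
    calc ((1 - x) / x) * binTail κ x θ ≤ (1/x) * (2 ^ κ * x ^ θ) := h2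
      _ = 2 ^ κ * x ^ (θ - 1) := h3
      _ ≤ 2 ^ κ * x := by
        have : (0:ℝ) < 2 ^ κ := by positivity
        nlinarith
  unfold Hmf
  have h5 : lam * (((1 - x) / x) * binTail κ x θ) ≤ lam * (2 ^ κ * x) :=
    mul_le_mul_of_nonneg_left key hlam
  nlinarith [h5]

lemma mul_Hmf (κ θ : ℕ) {lam x : ℝ} (hx0 : 0 < x) :
    x * Hmf κ θ lam x = -x + lam * (1 - x) * binTail κ x θ := by
  unfold Hmf
  field_simp


lemma g_nonneg (κ θ : ℕ) {x : ℝ} (hx0 : 0 < x) (hx1 : x ≤ 1) :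
    0 ≤ ((1 - x) / x) * binTail κ x θ := by
  have := binTail_nonneg κ θ hx0.le hx1
  have h1x : (0:ℝ) ≤ 1 - x := by linarith
  positivity

lemma Hmf_neg_of_lam (κ θ : ℕ) (hθ : 2 ≤ θ) {lam : ℝ} (hlam : 0 ≤ lam)
    (h : lam < lambdaMF κ θ) :
    ∀ x : ℝ, 0 < x → x ≤ 1 → Hmf κ θ lam x < 0 := by
  set S := {lam' : ℝ | 0 ≤ lam' ∧ sSup ((fun x => Hmf κ θ lam' x) '' Set.Ioc 0 1) < 0} with hS
  have hne : S.Nonempty := by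
    by_contra hcon
    rw [Set.not_nonempty_iff_eq_empty] at hcon
    rw [lambdaMF, ← hS, hcon, Real.sSup_empty] at h
    linarith
  obtain ⟨lam'', hmem, hlt⟩ := exists_lt_of_lt_csSup hne h
  obtain ⟨hlam'', hsup⟩ := hmem
  intro x hx0 hx1
  have hbdd : BddAbove ((fun x => Hmf κ θ lam'' x) '' Set.Ioc 0 1) := by
    refine ⟨-1 + lam'' * 2 ^ κ, ?_⟩
    rintro y ⟨z, hz, rfl⟩
    have := Hmf_le κ θ hθ hlam'' hz.1 hz.2
    have h2 : lam'' * 2 ^ κ * z ≤ lam'' * 2 ^ κ * 1 := by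
      have : (0:ℝ) ≤ lam'' * 2 ^ κ := by positivity
      nlinarith [hz.2]
    simp only [Set.mem_setOf_eq]
    linarith
  have h1 : Hmf κ θ lam'' x ≤ sSup ((fun x => Hmf κ θ lam'' x) '' Set.Ioc 0 1) :=
    le_csSup hbdd ⟨x, ⟨hx0, hx1⟩, rfl⟩
  have h2 : Hmf κ θ lam x ≤ Hmf κ θ lam'' x := by
    unfold Hmf
    have hg := g_nonneg κ θ hx0 hx1
    nlinarith [hlt.le]
  linarith

lemma Hmf_neg_of_p (κ θ : ℕ) {lam p : ℝ} (hp1 : p ≤ 1)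
    (h : p < pcMF κ θ lam) :
    ∀ x : ℝ, 0 < x → x ≤ p → Hmf κ θ lam x < 0 := by
  intro x hx0 hxp
  by_contra hcon
  push_neg at hcon
  have hmem : x ∈ {x ∈ Set.Ioc (0:ℝ) 1 | 0 ≤ Hmf κ θ lam x} :=
    ⟨⟨hx0, hxp.trans hp1⟩, hcon⟩
  have hbdd : BddBelow {x ∈ Set.Ioc (0:ℝ) 1 | 0 ≤ Hmf κ θ lam x} :=
    ⟨0, fun y hy => hy.1.1.le⟩
  have := csInf_le hbdd hmem
  rw [← pcMF] at this
  linarith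

lemma Hmf_uniform_neg (κ θ : ℕ) (hθ : 2 ≤ θ) {lam p : ℝ} (hlam : 0 ≤ lam)
    (hp0 : 0 < p) (hp1 : p ≤ 1)
    (hneg : ∀ x : ℝ, 0 < x → x ≤ p → Hmf κ θ lam x < 0) :
    ∃ δ : ℝ, 0 < δ ∧ ∀ x : ℝ, 0 < x → x ≤ p → Hmf κ θ lam x ≤ -δ := by
  set K : ℝ := lam * 2 ^ κ with hK
  have hK0 : 0 ≤ K := by positivity
  set a : ℝ := min p (1 / (2 * (K + 1))) with ha
  have ha0 : 0 < a := lt_min hp0 (by positivity)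
  have hap : a ≤ p := min_le_left _ _
  have hcont : ContinuousOn (fun x => Hmf κ θ lam x) (Set.Icc a p) := by
    unfold Hmf
    apply ContinuousOn.add continuousOn_const
    apply ContinuousOn.mul
    · apply ContinuousOn.mul continuousOn_const
      exact ContinuousOn.div (by fun_prop) (by fun_prop)
        (fun x hx => ne_of_gt (lt_of_lt_of_le ha0 hx.1))
    · unfold binTail; fun_prop
  obtain ⟨x₀, hx₀mem, hx₀max⟩ :=
    (isCompact_Icc).exists_isMaxOn (Set.nonempty_Icc.mpr hap) hcont
  have hM : Hmf κ θ lam x₀ < 0 := hneg x₀ (lt_of_lt_of_le ha0 hx₀mem.1) hx₀mem.2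
  refine ⟨min (1/2) (-(Hmf κ θ lam x₀)), lt_min (by norm_num) (by linarith), ?_⟩
  intro x hx0 hxp
  rcases le_or_gt x a with hxa | hxa
  · have h1 : Hmf κ θ lam x ≤ -1 + K * x := by
      have := Hmf_le κ θ hθ hlam hx0 (hxp.trans hp1)
      rw [hK]; linarith [this]
    have h2 : K * x ≤ K * a := by nlinarith
    have h3 : K * a ≤ 1/2 := by
      have haa : a ≤ 1 / (2 * (K + 1)) := min_le_right _ _
      have h4 : K * a ≤ K * (1 / (2 * (K + 1))) := by nlinarith
      have h5 : K * (1 / (2 * (K + 1))) ≤ 1/2 := by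
        rw [mul_one_div, div_le_iff₀ (by positivity : (0:ℝ) < 2 * (K + 1))]
        nlinarith
      linarith
    have : min (1/2 : ℝ) (-(Hmf κ θ lam x₀)) ≤ 1/2 := min_le_left _ _
    linarith
  · have := hx₀max ⟨hxa.le, hxp⟩
    simp only [Set.mem_setOf_eq] at this
    have : min (1/2 : ℝ) (-(Hmf κ θ lam x₀)) ≤ -(Hmf κ θ lam x₀) := min_le_right _ _
    linarith [hx₀max ⟨hxa.le, hxp⟩]

lemma le_init_of_deriv_nonpos {f f' : ℝ → ℝ}
    (hd : ∀ t, 0 ≤ t → HasDerivAt f (f' t) t) (hle : ∀ t, 0 < t → f' t ≤ 0) :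
    ∀ t, 0 ≤ t → f t ≤ f 0 := by
  have h := antitoneOn_of_deriv_nonpos (convex_Ici (0:ℝ))
    (fun t ht => (hd t ht).continuousAt.continuousWithinAt)
    (fun t ht => by
      rw [interior_Ici] at ht
      exact (hd t ht.le).differentiableAt.differentiableWithinAt)
    (fun t ht => by
      rw [interior_Ici] at ht
      rw [(hd t ht.le).deriv]
      exact hle t ht)
  intro t ht
  exact h (Set.self_mem_Ici) ht ht

lemma ge_init_of_deriv_nonneg {f f' : ℝ → ℝ}
    (hd : ∀ t, 0 ≤ t → HasDerivAt f (f' t) t) (hle : ∀ t, 0 < t → 0 ≤ f' t) :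
    ∀ t, 0 ≤ t → f 0 ≤ f t := by
  have h := le_init_of_deriv_nonpos (f := fun t => -f t) (f' := fun t => -f' t)
    (fun t ht => (hd t ht).neg) (fun t ht => neg_nonpos.mpr (hle t ht))
  intro t ht
  have := h t ht
  simp only [neg_le_neg_iff] at this
  linarith

lemma barrier (κ θ : ℕ) {lam p : ℝ} {ρ : ℝ → ℝ}
    (hρmem : ∀ t, 0 ≤ t → ρ t ∈ Set.Ioc (0:ℝ) 1)
    (hρ0 : ρ 0 = p)
    (hderiv : ∀ t, 0 ≤ t →
      HasDerivAt ρ (-ρ t + lam * (1 - ρ t) * binTail κ (ρ t) θ) t)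
    (hneg : ∀ x : ℝ, 0 < x → x ≤ p → Hmf κ θ lam x < 0) :
    ∀ t, 0 ≤ t → ρ t ≤ p := by
  by_contra hcon
  push_neg at hcon
  obtain ⟨t₀, ht₀0, ht₀⟩ := hcon
  set σ : ℝ → ℝ := fun t => ρ (max t 0) with hσdef
  have hcρ : ContinuousOn ρ (Set.Ici 0) :=
    fun t ht => (hderiv t ht).continuousAt.continuousWithinAt
  have hσc : Continuous σ :=
    hcρ.comp_continuous (continuous_id.max continuous_const)
      (fun t => Set.mem_Ici.mpr (le_max_right _ _))
  have hσeq : ∀ t, 0 ≤ t → σ t = ρ t := by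
    intro t ht; simp [hσdef, max_eq_left ht]
  set S : Set ℝ := Set.Icc 0 t₀ ∩ σ ⁻¹' (Set.Iic p) with hSdef
  have hScl : IsClosed S := isClosed_Icc.inter (isClosed_Iic.preimage hσc)
  have hSne : S.Nonempty := ⟨0, ⟨le_refl 0, ht₀0⟩, by
    simp only [Set.mem_preimage, Set.mem_Iic]
    rw [hσeq 0 le_rfl, hρ0]⟩
  have hSbdd : BddAbove S := ⟨t₀, fun y hy => hy.1.2⟩
  set s : ℝ := sSup S with hsdef
  have hsS : s ∈ S := hScl.csSup_mem hSne hSbdd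
  have hs0 : 0 ≤ s := hsS.1.1
  have hst₀ : s ≤ t₀ := hsS.1.2
  have hρs : ρ s ≤ p := by
    have := hsS.2
    simp only [Set.mem_preimage, Set.mem_Iic] at this
    rwa [hσeq s hs0] at this
  have hslt : s < t₀ := by
    rcases lt_or_eq_of_le hst₀ with h | h
    · exact h
    · exfalso; rw [h] at hρs; linarith
  have hρs0 : 0 < ρ s := (hρmem s hs0).1
  have hdneg : -ρ s + lam * (1 - ρ s) * binTail κ (ρ s) θ < 0 := by
    rw [← mul_Hmf κ θ hρs0]
    exact mul_neg_of_pos_of_neg hρs0 (hneg (ρ s) hρs0 hρs)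
  have hd := hderiv s hs0
  have hslope := hasDerivAt_iff_tendsto_slope.mp hd
  have h1 : ∀ᶠ t in nhdsWithin s {s}ᶜ, slope ρ s t < 0 :=
    hslope.eventually_lt_const hdneg
  have hmono : nhdsWithin s (Set.Ioi s) ≤ nhdsWithin s {s}ᶜ :=
    nhdsWithin_mono s (fun t ht => ne_of_gt ht)
  have h2 : ∀ᶠ t in nhdsWithin s (Set.Ioi s), slope ρ s t < 0 := h1.filter_mono hmono
  have h3 : ∀ᶠ t in nhdsWithin s (Set.Ioi s), t < t₀ := by
    have hm : Set.Iio t₀ ∈ nhdsWithin s (Set.Ioi s) := nhdsWithin_le_nhds (Iio_mem_nhds hslt)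
    exact hm
  have h4 : ∀ᶠ t in nhdsWithin s (Set.Ioi s), t ∈ Set.Ioi s :=
    eventually_mem_nhdsWithin
  obtain ⟨t, hts, htlt, htIoi⟩ := (h2.and (h3.and h4)).exists
  have hst : s < t := htIoi
  have hρt : ρ t < ρ s := by
    have hsl : slope ρ s t = (ρ t - ρ s) / (t - s) := slope_def_field ρ s t
    rw [hsl] at hts
    have := div_neg_iff.mp hts
    rcases this with ⟨_, h⟩ | ⟨h, _⟩
    · linarith
    · linarith
  have htS : t ∈ S := by
    constructor
    · exact ⟨hs0.trans hst.le, htlt.le⟩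
    · simp only [Set.mem_preimage, Set.mem_Iic]
      rw [hσeq t (hs0.trans hst.le)]
      linarith
  have := le_csSup hSbdd htS
  rw [← hsdef] at this
  linarith

lemma stepA (κ θ : ℕ) {lam p : ℝ} (hlam : 0 ≤ lam) {ρ : ℝ → ℝ}
    (hρmem : ∀ t, 0 ≤ t → ρ t ∈ Set.Ioc (0:ℝ) 1)
    (hρ0 : ρ 0 = p)
    (hderiv : ∀ t, 0 ≤ t →
      HasDerivAt ρ (-ρ t + lam * (1 - ρ t) * binTail κ (ρ t) θ) t) :
    ∀ t, 0 ≤ t → p ≤ ρ t * Real.exp t := by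
  have hd : ∀ t, 0 ≤ t → HasDerivAt (fun t => ρ t * Real.exp t)
      ((fun t => (-ρ t + lam * (1 - ρ t) * binTail κ (ρ t) θ) * Real.exp t
        + ρ t * Real.exp t) t) t :=
    fun t ht => (hderiv t ht).mul (Real.hasDerivAt_exp t)
  have h := ge_init_of_deriv_nonneg hd (by
    intro t ht
    obtain ⟨hr0, hr1⟩ := hρmem t ht.le
    have hb := binTail_nonneg κ θ hr0.le hr1
    have hnn : 0 ≤ lam * (1 - ρ t) * binTail κ (ρ t) θ :=
      mul_nonneg (mul_nonneg hlam (by linarith)) hb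
    have he := Real.exp_pos t
    nlinarith)
  intro t ht
  have := h t ht
  simpa [hρ0] using this

lemma stepB (κ θ : ℕ) {lam p δ : ℝ}
    (hδ : ∀ x : ℝ, 0 < x → x ≤ p → Hmf κ θ lam x ≤ -δ) {ρ : ℝ → ℝ}
    (hρmem : ∀ t, 0 ≤ t → ρ t ∈ Set.Ioc (0:ℝ) 1)
    (hρ0 : ρ 0 = p)
    (hderiv : ∀ t, 0 ≤ t →
      HasDerivAt ρ (-ρ t + lam * (1 - ρ t) * binTail κ (ρ t) θ) t)
    (hbar : ∀ t, 0 ≤ t → ρ t ≤ p) :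
    ∀ t, 0 ≤ t → ρ t * Real.exp (δ * t) ≤ p := by
  have hlin : ∀ t : ℝ, HasDerivAt (fun t : ℝ => δ * t) δ t := by
    intro t; simpa using (hasDerivAt_id t).const_mul δ
  have hd : ∀ t, 0 ≤ t → HasDerivAt (fun t => ρ t * Real.exp (δ * t))
      ((fun t => (-ρ t + lam * (1 - ρ t) * binTail κ (ρ t) θ) * Real.exp (δ * t)
        + ρ t * (Real.exp (δ * t) * δ)) t) t :=
    fun t ht => (hderiv t ht).mul (hlin t).exp
  have h := le_init_of_deriv_nonpos hd (by
    intro t ht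
    obtain ⟨hr0, hr1⟩ := hρmem t ht.le
    have hHle : Hmf κ θ lam (ρ t) ≤ -δ := hδ (ρ t) hr0 (hbar t ht.le)
    have h1 : -ρ t + lam * (1 - ρ t) * binTail κ (ρ t) θ ≤ -δ * ρ t := by
      rw [← mul_Hmf κ θ hr0]
      nlinarith
    have he := Real.exp_pos (δ * t)
    nlinarith)
  intro t ht
  have := h t ht
  simpa [hρ0] using this

lemma stepC (κ θ : ℕ) (hθ : 2 ≤ θ) {lam p δ K c : ℝ} (hlam : 0 ≤ lam)
    (hδ0 : 0 < δ) (hK : K = lam * 2 ^ κ) (hc0 : 0 ≤ c) (hcδ : c * δ = K * p)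
    (hp0 : 0 < p) {ρ : ℝ → ℝ}
    (hρmem : ∀ t, 0 ≤ t → ρ t ∈ Set.Ioc (0:ℝ) 1)
    (hρ0 : ρ 0 = p)
    (hderiv : ∀ t, 0 ≤ t →
      HasDerivAt ρ (-ρ t + lam * (1 - ρ t) * binTail κ (ρ t) θ) t)
    (hB : ∀ t, 0 ≤ t → ρ t * Real.exp (δ * t) ≤ p) :
    ∀ t, 0 ≤ t → ρ t * Real.exp t ≤ p * Real.exp c := by
  have hK0 : 0 ≤ K := by rw [hK]; positivity
  have hlin : ∀ t : ℝ, HasDerivAt (fun t : ℝ => δ * t) δ t := by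
    intro t; simpa using (hasDerivAt_id t).const_mul δ
  have hinner : ∀ t : ℝ, HasDerivAt (fun t : ℝ => c * Real.exp (-(δ * t)))
      (c * (Real.exp (-(δ * t)) * -δ)) t :=
    fun t => ((hlin t).neg.exp).const_mul c
  have hd : ∀ t, 0 ≤ t → HasDerivAt
      (fun t => ρ t * Real.exp t * Real.exp (c * Real.exp (-(δ * t))))
      ((fun t =>
        ((-ρ t + lam * (1 - ρ t) * binTail κ (ρ t) θ) * Real.exp t + ρ t * Real.exp t)
          * Real.exp (c * Real.exp (-(δ * t)))
        + (ρ t * Real.exp t) *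
          (Real.exp (c * Real.exp (-(δ * t))) * (c * (Real.exp (-(δ * t)) * -δ)))) t) t :=
    fun t ht => ((hderiv t ht).mul (Real.hasDerivAt_exp t)).mul (hinner t).exp
  have h := le_init_of_deriv_nonpos hd (by
    intro t ht
    obtain ⟨hr0, hr1⟩ := hρmem t ht.le
    have hb0 := binTail_nonneg κ θ hr0.le hr1
    have hb1 := binTail_le κ θ hr0.le hr1
    have hF := Real.exp_pos (-(δ * t))
    have hE1 := Real.exp_pos t
    have hE2 := Real.exp_pos (c * Real.exp (-(δ * t)))
    have hEδ : Real.exp (δ * t) * Real.exp (-(δ * t)) = 1 := by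
      rw [← Real.exp_add]; simp
    have hxF : ρ t ≤ p * Real.exp (-(δ * t)) := by
      have h1 := hB t ht.le
      nlinarith [mul_le_mul_of_nonneg_right h1 hF.le]
    have hkey : lam * (1 - ρ t) * binTail κ (ρ t) θ
        ≤ K * p * Real.exp (-(δ * t)) * ρ t := by
      have h1 : lam * (1 - ρ t) * binTail κ (ρ t) θ ≤ lam * binTail κ (ρ t) θ := by
        nlinarith [mul_nonneg (mul_nonneg hlam hr0.le) hb0]
      have h2 : lam * binTail κ (ρ t) θ ≤ K * ρ t ^ θ := by
        rw [hK]
        have hp2 : (0:ℝ) ≤ ρ t ^ θ := by positivity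
        nlinarith
      have h3 : ρ t ^ θ ≤ ρ t ^ 2 := pow_le_pow_of_le_one hr0.le hr1 hθ
      have h4 : K * ρ t ^ 2 ≤ K * (ρ t * (p * Real.exp (-(δ * t)))) := by
        have h5 : ρ t ^ 2 ≤ ρ t * (p * Real.exp (-(δ * t))) := by nlinarith
        nlinarith
      nlinarith
    have hDeq : ((-ρ t + lam * (1 - ρ t) * binTail κ (ρ t) θ) * Real.exp t
          + ρ t * Real.exp t) * Real.exp (c * Real.exp (-(δ * t)))
        + (ρ t * Real.exp t) *
          (Real.exp (c * Real.exp (-(δ * t))) * (c * (Real.exp (-(δ * t)) * -δ)))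
        = Real.exp t * Real.exp (c * Real.exp (-(δ * t))) *
          (lam * (1 - ρ t) * binTail κ (ρ t) θ
            - (c * δ) * Real.exp (-(δ * t)) * ρ t) := by ring
    show ((-ρ t + lam * (1 - ρ t) * binTail κ (ρ t) θ) * Real.exp t
          + ρ t * Real.exp t) * Real.exp (c * Real.exp (-(δ * t)))
        + (ρ t * Real.exp t) *
          (Real.exp (c * Real.exp (-(δ * t))) * (c * (Real.exp (-(δ * t)) * -δ))) ≤ 0
    rw [hDeq, hcδ]
    apply mul_nonpos_of_nonneg_of_nonpos (by positivity)
    linarith)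
  intro t ht
  have hw := h t ht
  simp only [hρ0, mul_zero, neg_zero, Real.exp_zero, mul_one, one_mul] at hw
  have hE2 : (1:ℝ) ≤ Real.exp (c * Real.exp (-(δ * t))) :=
    Real.one_le_exp (by positivity)
  obtain ⟨hr0, hr1⟩ := hρmem t ht
  have hexpt := Real.exp_pos t
  have hstep : ρ t * Real.exp t * 1 ≤ ρ t * Real.exp t * Real.exp (c * Real.exp (-(δ * t))) :=
    mul_le_mul_of_nonneg_left hE2 (mul_nonneg hr0.le hexpt.le)
  linarith

/-- Proposition 2, extinction branch. -/
theorem stmt5 (κ θ : ℕ) (hθ : 2 ≤ θ) (hκθ : θ ≤ κ) (lam : ℝ) (hlam : 0 ≤ lam)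
    (p : ℝ) (hp : p ∈ Set.Ioc (0:ℝ) 1) (ρ : ℝ → ℝ)
    (hρmem : ∀ t, 0 ≤ t → ρ t ∈ Set.Ioc (0:ℝ) 1)
    (hρ0 : ρ 0 = p)
    (hderiv : ∀ t, 0 ≤ t →
      HasDerivAt ρ (-ρ t + lam * (1 - ρ t) * binTail κ (ρ t) θ) t)
    (hsub : lam < lambdaMF κ θ ∨ p < pcMF κ θ lam) :
    ∃ C : ℝ, 0 < C ∧ ∀ t, 0 ≤ t →
      p * Real.exp (-t) ≤ ρ t ∧ ρ t ≤ C * Real.exp (-t) := by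
  obtain ⟨hp0, hp1⟩ := hp
  have hneg : ∀ x : ℝ, 0 < x → x ≤ p → Hmf κ θ lam x < 0 := by
    rcases hsub with h | h
    · intro x hx0 hxp
      exact Hmf_neg_of_lam κ θ hθ hlam h x hx0 (hxp.trans hp1)
    · exact Hmf_neg_of_p κ θ hp1 h
  obtain ⟨δ, hδ0, hδ⟩ := Hmf_uniform_neg κ θ hθ hlam hp0 hp1 hneg
  have hbar : ∀ t, 0 ≤ t → ρ t ≤ p := barrier κ θ hρmem hρ0 hderiv hneg
  have hK0 : (0:ℝ) ≤ lam * 2 ^ κ := by positivity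
  have hc0 : (0:ℝ) ≤ lam * 2 ^ κ * p / δ := by positivity
  have hcδ : (lam * 2 ^ κ * p / δ) * δ = lam * 2 ^ κ * p := by field_simp
  have hA := stepA κ θ hlam hρmem hρ0 hderiv
  have hB := stepB κ θ hδ hρmem hρ0 hderiv hbar
  have hC := stepC κ θ hθ hlam hδ0 rfl hc0 hcδ hp0 hρmem hρ0 hderiv hB
  refine ⟨p * Real.exp (lam * 2 ^ κ * p / δ), by positivity, ?_⟩
  intro t ht
  obtain ⟨hr0, hr1⟩ := hρmem t ht
  have hexpnt := Real.exp_pos (-t)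
  have hEE : Real.exp t * Real.exp (-t) = 1 := by
    rw [← Real.exp_add]; simp
  constructor
  · nlinarith [mul_le_mul_of_nonneg_right (hA t ht) hexpnt.le]
  · nlinarith [mul_le_mul_of_nonneg_right (hC t ht) hexpnt.le]
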